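/- arXiv:1302.7077 — 4 statements merged into one kernel-verified Lean document; each statement's English description precedes it below -/
import Mathlib

section
/- Let d ≥ 1 and let a and M be positive semidefinite real symmetric d×d matrices. Then tr(a·M) ≥ d·(det a)^(1/d)·(det M)^(1/d). -/
open Matrix Finset

/-- Trace of a real Hermitian matrix is the sum of its eigenvalues. -/
lemma trace_eq_sum_eigenvalues_real {d : ℕ} {A : Matrix (Fin d) (Fin d) ℝ}
    (hA : A.IsHermitian) : A.trace = ∑ i, hA.eigenvalues i := by
  calc A.trace
      = ((hA.eigenvectorUnitary : Matrix (Fin d) (Fin d) ℝ) *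
          Matrix.diagonal (RCLike.ofReal ∘ hA.eigenvalues) *
          (star (hA.eigenvectorUnitary : Matrix (Fin d) (Fin d) ℝ))).trace := by
        exact congrArg Matrix.trace hA.spectral_theorem
    _ = (star (hA.eigenvectorUnitary : Matrix (Fin d) (Fin d) ℝ) *
          (hA.eigenvectorUnitary : Matrix (Fin d) (Fin d) ℝ) *
          Matrix.diagonal (RCLike.ofReal ∘ hA.eigenvalues)).trace := by
        rw [Matrix.trace_mul_cycle]
    _ = (Matrix.diagonal (RCLike.ofReal ∘ hA.eigenvalues)).trace := by
        rw [Unitary.coe_star_mul_self, one_mul]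
    _ = ∑ i, hA.eigenvalues i := by
        simp [Matrix.trace_diagonal]

lemma psd_det_nonneg {d : ℕ} {A : Matrix (Fin d) (Fin d) ℝ}
    (hA : A.PosSemidef) : 0 ≤ A.det := by
  rw [hA.isHermitian.det_eq_prod_eigenvalues]
  exact Finset.prod_nonneg fun i _ => by
    simpa using hA.eigenvalues_nonneg i

/-- AM–GM for a single PSD real matrix: `tr B ≥ d * (det B)^(1/d)`. -/
lemma trace_ge_det_rpow {d : ℕ} (hd : 1 ≤ d) {B : Matrix (Fin d) (Fin d) ℝ}
    (hB : B.PosSemidef) : (d : ℝ) * B.det ^ ((1 : ℝ) / d) ≤ B.trace := by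
  have hd0 : (0 : ℝ) < d := by exact_mod_cast hd
  set lam := hB.isHermitian.eigenvalues with hlam
  have hnn : ∀ i : Fin d, 0 ≤ lam i := fun i => hB.eigenvalues_nonneg i
  have hdet : B.det = ∏ i, lam i := by
    simpa using hB.isHermitian.det_eq_prod_eigenvalues
  have htr : B.trace = ∑ i, lam i := trace_eq_sum_eigenvalues_real hB.isHermitian
  have hgm : ∏ i, (lam i) ^ ((1 : ℝ) / d) ≤ ∑ i, ((1 : ℝ) / d) * lam i := by
    exact Real.geom_mean_le_arith_mean_weighted Finset.univ (fun _ => (1 : ℝ) / d) lam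
      (fun i _ => by positivity)
      (by simp [Finset.sum_const, hd0.ne'])
      (fun i _ => hnn i)
  have hprod : B.det ^ ((1 : ℝ) / d) = ∏ i, (lam i) ^ ((1 : ℝ) / d) := by
    rw [hdet, ← Real.finset_prod_rpow _ _ (fun i _ => hnn i)]
  calc (d : ℝ) * B.det ^ ((1 : ℝ) / d)
      = (d : ℝ) * ∏ i, (lam i) ^ ((1 : ℝ) / d) := by rw [hprod]
    _ ≤ (d : ℝ) * ∑ i, ((1 : ℝ) / d) * lam i := by
        exact mul_le_mul_of_nonneg_left hgm hd0.le
    _ = ∑ i, lam i := by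
        rw [Finset.mul_sum]
        congr 1; ext i; field_simp
    _ = B.trace := htr.symm

/-- Matrix AM–GM: for positive semidefinite real symmetric `d × d` matrices `a` and `M`,
`tr (a * M) ≥ d * (det a)^(1/d) * (det M)^(1/d)`. -/
theorem matrix_amgm_real (d : ℕ) (hd : 1 ≤ d)
    (a M : Matrix (Fin d) (Fin d) ℝ)
    (ha : a.PosSemidef) (hM : M.PosSemidef) :
    (a * M).trace ≥ d * a.det ^ ((1 : ℝ) / d) * M.det ^ ((1 : ℝ) / d) := by
  open scoped MatrixOrder in
  set s := CFC.sqrt a with hs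
  open scoped MatrixOrder in
  have hsps : s.PosSemidef := Matrix.nonneg_iff_posSemidef.mp (CFC.sqrt_nonneg a)
  open scoped MatrixOrder in
  have hss : s * s = a := CFC.sqrt_mul_sqrt_self a (Matrix.nonneg_iff_posSemidef.mpr ha)
  have hsherm : sᴴ = s := hsps.isHermitian.eq
  have hB : (s * M * s).PosSemidef := by
    have := hM.mul_mul_conjTranspose_same s
    rwa [hsherm] at this
  have htr : (a * M).trace = (s * M * s).trace := by
    rw [← hss, mul_assoc, Matrix.trace_mul_cycle, ← mul_assoc]
  have hdet : (s * M * s).det = a.det * M.det := by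
    rw [Matrix.det_mul, Matrix.det_mul, ← hss, Matrix.det_mul]; ring
  have key := trace_ge_det_rpow hd hB
  rw [hdet] at key
  rw [ge_iff_le, htr]
  calc (d : ℝ) * a.det ^ ((1 : ℝ) / d) * M.det ^ ((1 : ℝ) / d)
      = (d : ℝ) * (a.det * M.det) ^ ((1 : ℝ) / d) := by
        rw [Real.mul_rpow (psd_det_nonneg ha) (psd_det_nonneg hM)]; ring
    _ ≤ (s * M * s).trace := key
end

section
/- Let d ≥ 1, let f ≥ 0 be a real number, and let M be a real symmetric d×d matrix such that tr(a·M) + (det a)^(1/d)·f ≤ 0 for every positive semidefinite symmetric d×d matrix a with tr(a) = 1. Then det(−M) ≥ d^(−d)·f^d. -/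
open Finset in
private lemma bellman_aux (d : ℕ) (hd : 1 ≤ d) (f : ℝ) (hf : 0 ≤ f) (μ : Fin d → ℝ)
    (hμ : ∀ t : Fin d → ℝ, (∀ i, 0 ≤ t i) → (∑ i, t i) = 1 →
      (∑ i, t i * μ i) + (∏ i, t i) ^ ((1 : ℝ) / d) * f ≤ 0) :
    (d : ℝ) ^ (-(d : ℤ)) * f ^ d ≤ ∏ i, (-μ i) := by
  have hd0 : (0:ℝ) < d := by exact_mod_cast hd
  have hdne : (d:ℝ) ≠ 0 := ne_of_gt hd0
  -- rpow helper
  have hrd : ∀ X : ℝ, 0 ≤ X → (X ^ ((1:ℝ)/d)) ^ d = X := by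
    intro X hX
    rw [← Real.rpow_natCast (X ^ ((1:ℝ)/d)) d, ← Real.rpow_mul hX,
      one_div_mul_cancel hdne, Real.rpow_one]
  -- Step A : every eigenvalue is ≤ 0
  have hA : ∀ i, μ i ≤ 0 := by
    intro i
    have ht := hμ (fun j => if j = i then 1 else 0)
      (fun j => by split <;> norm_num) (by simp)
    simp only [ite_mul, one_mul, zero_mul, Finset.sum_ite_eq', Finset.mem_univ,
      if_true] at ht
    have h0 : 0 ≤ (∏ j, if j = i then (1:ℝ) else 0) ^ ((1:ℝ)/d) * f :=
      mul_nonneg (Real.rpow_nonneg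
        (Finset.prod_nonneg (fun j _ => by split <;> norm_num)) _) hf
    linarith
  rcases eq_or_lt_of_le hf with hf0 | hfpos
  · -- f = 0
    rw [← hf0, zero_pow (by omega : d ≠ 0), mul_zero]
    exact Finset.prod_nonneg fun i _ => by simpa using hA i
  -- f > 0
  by_cases hz : ∃ i, μ i = 0
  · -- contradiction: some eigenvalue vanishes
    exfalso
    obtain ⟨i, hi⟩ := hz
    set K : ℝ := ∑ j, (-μ j) with hK
    have hK0 : 0 ≤ K := Finset.sum_nonneg fun j _ => by simpa using hA j
    have hKd0 : (0:ℝ) ≤ K ^ d := pow_nonneg hK0 d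
    have hfd : (0:ℝ) < f ^ d := pow_pos hfpos d
    set ε : ℝ := min (1/(2*d)) (f^d/(2*(K^d+1))) with hε
    have hε0 : 0 < ε := lt_min (by positivity) (by positivity)
    have hε1 : ε ≤ 1/(2*d) := min_le_left _ _
    have hε2 : ε ≤ f^d/(2*(K^d+1)) := min_le_right _ _
    set t : Fin d → ℝ := fun j => ε + (if j = i then 1 - d*ε else 0) with htdef
    clear_value t
    have hd1 : (1:ℝ) ≤ d := by exact_mod_cast hd
    have hti : t i = 1 - (d-1)*ε := by simp [htdef]; ring
    have htihalf : (1:ℝ)/2 ≤ t i := by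
      rw [hti]
      have h1 : (d-1)*ε ≤ (d-1) * (1/(2*d)) :=
        mul_le_mul_of_nonneg_left hε1 (by linarith)
      have h2 : ((d:ℝ)-1) * (1/(2*(d:ℝ))) ≤ 1/2 := by
        rw [mul_one_div, div_le_div_iff₀ (by positivity) (by norm_num : (0:ℝ) < 2)]
        linarith
      linarith
    have htnn : ∀ j, 0 ≤ t j := by
      intro j
      by_cases hj : j = i
      · rw [hj, hti]; linarith
      · simp only [htdef, hj, if_false, add_zero]; linarith
    have htsum : ∑ j, t j = 1 := by
      simp only [htdef, Finset.sum_add_distrib, Finset.sum_const, Finset.card_univ,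
        Fintype.card_fin, nsmul_eq_mul, Finset.sum_ite_eq', Finset.mem_univ, if_true]
      ring
    have hprod : ∏ j, t j = t i * ε ^ (d-1) := by
      rw [← Finset.mul_prod_erase Finset.univ t (Finset.mem_univ i)]
      congr 1
      rw [Finset.prod_congr rfl (fun j hj => ?_), Finset.prod_const,
        Finset.card_erase_of_mem (Finset.mem_univ i), Finset.card_univ, Fintype.card_fin]
      have : j ≠ i := Finset.ne_of_mem_erase hj
      simp [htdef, this]
    have hsum2 : ∑ j, t j * μ j = -(ε * K) := by
      have : ∀ j, t j * μ j = ε * μ j + (if j = i then 1 - d*ε else 0) * μ j :=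
        fun j => by rw [htdef]; ring
      rw [Finset.sum_congr rfl (fun j _ => this j), Finset.sum_add_distrib]
      simp only [ite_mul, zero_mul, Finset.sum_ite_eq', Finset.mem_univ, if_true, hi,
        mul_zero]
      rw [← Finset.mul_sum, hK, Finset.sum_neg_distrib]
      ring
    have hmain := hμ t htnn htsum
    rw [hsum2, hprod] at hmain
    -- f * (t i * ε^(d-1))^(1/d) ≤ ε * K
    have hP : (0:ℝ) ≤ t i * ε ^ (d-1) := mul_nonneg (htnn i) (by positivity)
    have key : (t i * ε ^ (d-1)) ^ ((1:ℝ)/d) * f ≤ ε * K := by linarith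
    have hpow : ((t i * ε ^ (d-1)) ^ ((1:ℝ)/d) * f) ^ d ≤ (ε * K) ^ d := by
      apply pow_le_pow_left₀ (mul_nonneg (Real.rpow_nonneg hP _) hf) key
    rw [mul_pow, hrd _ hP, mul_pow] at hpow
    -- t i * ε^(d-1) * f^d ≤ ε^d * K^d
    have hεd : ε ^ d = ε ^ (d-1) * ε := by
      rw [← pow_succ]
      congr 1
      omega
    rw [hεd] at hpow
    have hcancel : t i * f ^ d ≤ ε * K ^ d := by
      have h' : (t i * f ^ d) * ε ^ (d-1) ≤ (ε * K ^ d) * ε ^ (d-1) := by ring_nf at hpow ⊢; linarith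
      exact le_of_mul_le_mul_right h' (by positivity)
    have hεK : ε * K ^ d < f ^ d / 2 := by
      have h1 : ε * K ^ d ≤ f^d/(2*(K^d+1)) * K ^ d :=
        mul_le_mul_of_nonneg_right hε2 hKd0
      have h2 : f^d/(2*(K^d+1)) * K ^ d < f ^ d / 2 := by
        rw [div_mul_eq_mul_div, div_lt_div_iff₀ (by positivity) (by norm_num : (0:ℝ) < 2)]
        nlinarith
      linarith
    nlinarith [mul_le_mul_of_nonneg_right htihalf hfd.le]
  · -- all eigenvalues negative
    push_neg at hz
    set ν : Fin d → ℝ := fun i => -μ i with hν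
    clear_value ν
    have hνpos : ∀ i, 0 < ν i := fun i => by
      have h1 := lt_of_le_of_ne (hA i) (hz i)
      simp only [hν]
      linarith
    set S : ℝ := ∑ i, (ν i)⁻¹ with hS
    have hSpos : 0 < S := Finset.sum_pos (fun i _ => inv_pos.2 (hνpos i)) ⟨⟨0, hd⟩, Finset.mem_univ _⟩
    set t : Fin d → ℝ := fun i => (ν i)⁻¹ * S⁻¹ with ht
    clear_value t
    have htnn : ∀ i, 0 ≤ t i := fun i => by
      rw [ht]
      exact mul_nonneg (inv_nonneg.2 (hνpos i).le) (inv_nonneg.2 hSpos.le)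
    have htsum : ∑ i, t i = 1 := by
      rw [ht, ← Finset.sum_mul, ← hS, mul_inv_cancel₀ (ne_of_gt hSpos)]
    set Q : ℝ := ∏ i, ν i with hQ
    have hQpos : 0 < Q := Finset.prod_pos fun i _ => hνpos i
    have hsum2 : ∑ i, t i * μ i = -((d:ℝ) * S⁻¹) := by
      have : ∀ i, t i * μ i = -S⁻¹ := by
        intro i
        have hμi : μ i = -ν i := by simp [hν]
        have hni : ν i ≠ 0 := ne_of_gt (hνpos i)
        simp only [ht]
        rw [hμi]
        calc (ν i)⁻¹ * S⁻¹ * (-ν i) = -(((ν i)⁻¹ * ν i) * S⁻¹) := by ring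
          _ = -S⁻¹ := by rw [inv_mul_cancel₀ hni, one_mul]
      rw [Finset.sum_congr rfl (fun i _ => this i), Finset.sum_const, Finset.card_univ,
        Fintype.card_fin, nsmul_eq_mul]
      ring
    have hprod : ∏ i, t i = Q⁻¹ * (S⁻¹) ^ d := by
      simp only [ht]
      rw [Finset.prod_mul_distrib, Finset.prod_const, Finset.card_univ, Fintype.card_fin,
        hQ, ← Finset.prod_inv_distrib]
    have hmain := hμ t htnn htsum
    rw [hsum2, hprod] at hmain
    have hX : (0:ℝ) ≤ Q⁻¹ * (S⁻¹) ^ d := by positivity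
    have key : (Q⁻¹ * (S⁻¹) ^ d) ^ ((1:ℝ)/d) * f ≤ (d:ℝ) * S⁻¹ := by linarith
    have hpow : ((Q⁻¹ * (S⁻¹) ^ d) ^ ((1:ℝ)/d) * f) ^ d ≤ ((d:ℝ) * S⁻¹) ^ d := by
      apply pow_le_pow_left₀ (mul_nonneg (Real.rpow_nonneg hX _) hf) key
    rw [mul_pow, hrd _ hX, mul_pow] at hpow
    -- Q⁻¹ * (S⁻¹)^d * f^d ≤ d^d * (S⁻¹)^d
    have hfin : Q⁻¹ * f ^ d ≤ (d:ℝ) ^ d := by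
      have h' : (Q⁻¹ * f ^ d) * (S⁻¹) ^ d ≤ ((d:ℝ) ^ d) * (S⁻¹) ^ d := by
        ring_nf at hpow ⊢; linarith
      exact le_of_mul_le_mul_right h' (by positivity)
    have hQne : Q ≠ 0 := ne_of_gt hQpos
    have : f ^ d ≤ (d:ℝ) ^ d * Q := by
      have h'' := mul_le_mul_of_nonneg_right hfin hQpos.le
      calc f ^ d = (Q⁻¹ * f ^ d) * Q := by
            rw [mul_comm Q⁻¹ (f^d), mul_assoc, inv_mul_cancel₀ hQne, mul_one]
        _ ≤ (d:ℝ) ^ d * Q := h''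
    have hdd : (0:ℝ) < (d:ℝ)^d := by positivity
    have hfinal : ((d:ℝ)^d)⁻¹ * f ^ d ≤ Q := by
      calc ((d:ℝ)^d)⁻¹ * f^d ≤ ((d:ℝ)^d)⁻¹ * ((d:ℝ)^d * Q) :=
            mul_le_mul_of_nonneg_left this (inv_nonneg.2 hdd.le)
        _ = Q := by rw [← mul_assoc, inv_mul_cancel₀ (ne_of_gt hdd), one_mul]
    rw [zpow_neg, zpow_natCast]
    exact hfinal
/-- If a real symmetric matrix `M` satisfies
`tr (a * M) + (det a)^(1/d) * f ≤ 0` for every PSD symmetric `a` with `tr a = 1`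
(where `f ≥ 0`), then `det (−M) ≥ d^(−d) * f^d`. -/
theorem det_neg_ge_of_bellman (d : ℕ) (hd : 1 ≤ d) (f : ℝ) (hf : 0 ≤ f)
    (M : Matrix (Fin d) (Fin d) ℝ) (hMsymm : M.IsSymm)
    (h : ∀ a : Matrix (Fin d) (Fin d) ℝ, a.PosSemidef → a.trace = 1 →
      (a * M).trace + a.det ^ ((1 : ℝ) / d) * f ≤ 0) :
    (-M).det ≥ (d : ℝ) ^ (-(d : ℤ)) * f ^ d := by
  have hM : M.IsHermitian := by
    rwa [Matrix.IsHermitian, Matrix.conjTranspose_eq_transpose_of_trivial]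
  set μ : Fin d → ℝ := hM.eigenvalues with hμdef
  set U : Matrix (Fin d) (Fin d) ℝ := (hM.eigenvectorUnitary : Matrix (Fin d) (Fin d) ℝ)
    with hUdef
  have hU1 : U * star U = 1 := Matrix.mem_unitaryGroup_iff.mp hM.eigenvectorUnitary.2
  have hU2 : star U * U = 1 := Matrix.mem_unitaryGroup_iff'.mp hM.eigenvectorUnitary.2
  have hspec : M = U * Matrix.diagonal μ * star U := by
    have := hM.spectral_theorem
    simpa using this
  have key : ∀ t : Fin d → ℝ, (∀ i, 0 ≤ t i) → (∑ i, t i) = 1 →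
      (∑ i, t i * μ i) + (∏ i, t i) ^ ((1 : ℝ) / d) * f ≤ 0 := by
    intro t htnn htsum
    set a : Matrix (Fin d) (Fin d) ℝ := U * Matrix.diagonal t * star U with ha
    have haPSD : a.PosSemidef := by
      have h2 := (Matrix.posSemidef_diagonal_iff.mpr htnn).mul_mul_conjTranspose_same U
      rw [ha, Matrix.star_eq_conjTranspose]
      exact h2
    have hatr : a.trace = 1 := by
      rw [ha, Matrix.trace_mul_cycle, hU2, one_mul, Matrix.trace_diagonal, htsum]
    have hadet : a.det = ∏ i, t i := by
      rw [ha, Matrix.det_mul, Matrix.det_mul, mul_comm, ← mul_assoc, ← Matrix.det_mul, hU2]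
      simp
    have htrmul : (a * M).trace = ∑ i, t i * μ i := by
      have : a * M = U * (Matrix.diagonal t * Matrix.diagonal μ) * star U := by
        rw [ha, hspec]
        rw [show U * Matrix.diagonal t * star U * (U * Matrix.diagonal μ * star U)
          = U * Matrix.diagonal t * (star U * U) * Matrix.diagonal μ * star U by
            noncomm_ring]
        rw [hU2]
        noncomm_ring
      rw [this, Matrix.trace_mul_cycle, ← mul_assoc, hU2, one_mul,
        Matrix.diagonal_mul_diagonal, Matrix.trace_diagonal]
    have := h a haPSD hatr
    rwa [htrmul, hadet] at this
  have hmain := bellman_aux d hd f hf μ key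
  have hdet : (-M).det = ∏ i, (-μ i) := by
    rw [Matrix.det_neg, Fintype.card_fin]
    have hdM : M.det = ∏ i, μ i := by simpa using hM.det_eq_prod_eigenvalues
    have h2 : ∏ i, (-μ i) = (∏ _i : Fin d, (-1:ℝ)) * ∏ i, μ i := by
      rw [← Finset.prod_mul_distrib]
      exact Finset.prod_congr rfl fun i _ => by ring
    rw [hdM, h2, Finset.prod_const, Finset.card_univ, Fintype.card_fin]
  rw [ge_iff_le, hdet]
  exact hmain
end

section
/- Let d ≥ 2 and f ≥ 0 a real number, and let M be a real symmetric d×d matrix which is negative semidefinite with det(−M) = d^(−d)·f^d. Then for every positive semidefinite symmetric d×d matrix a with tr(a) = 1, tr(a·M) + (det a)^(1/d)·f ≤ 0. -/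
open Matrix Finset
open scoped MatrixOrder

lemma trace_eq_sum_eig {d : ℕ} {P : Matrix (Fin d) (Fin d) ℝ} (hP : P.IsHermitian) :
    P.trace = ∑ i, hP.eigenvalues i := by
  conv_lhs => rw [hP.spectral_theorem, Unitary.conjStarAlgAut_apply]
  rw [Matrix.trace_mul_comm, ← mul_assoc,
    (Matrix.mem_unitaryGroup_iff').mp (hP.eigenvectorUnitary).2, one_mul]
  simp [Matrix.trace_diagonal]

lemma psd_det_nonneg_s18 {d : ℕ} {P : Matrix (Fin d) (Fin d) ℝ} (hP : P.PosSemidef) :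
    0 ≤ P.det := by
  have h := hP.1.det_eq_prod_eigenvalues
  simp only [RCLike.ofReal_real_eq_id, id_eq] at h
  rw [h]
  exact Finset.prod_nonneg fun i _ => hP.eigenvalues_nonneg i

/-- AM–GM for PSD matrices: `d * (det P)^(1/d) ≤ tr P`. -/
lemma amgm_trace {d : ℕ} (hd : 0 < d) {P : Matrix (Fin d) (Fin d) ℝ}
    (hP : P.PosSemidef) : (d : ℝ) * P.det ^ ((1 : ℝ) / d) ≤ P.trace := by
  have hd' : (d : ℝ) ≠ 0 := Nat.cast_ne_zero.mpr hd.ne'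
  have hnn : ∀ i ∈ Finset.univ, (0:ℝ) ≤ hP.1.eigenvalues i :=
    fun i _ => hP.eigenvalues_nonneg i
  have key := Real.geom_mean_le_arith_mean_weighted Finset.univ
    (fun _ => 1 / d) hP.1.eigenvalues
    (fun i _ => by positivity)
    (by rw [Finset.sum_const, Finset.card_univ, Fintype.card_fin, nsmul_eq_mul,
          mul_one_div, div_self hd'])
    hnn
  have hdet : P.det = ∏ i, hP.1.eigenvalues i := by
    have h := hP.1.det_eq_prod_eigenvalues
    simpa using h
  rw [Real.finset_prod_rpow Finset.univ _ hnn ((1:ℝ)/d)] at key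
  rw [trace_eq_sum_eig hP.1, hdet]
  calc (d:ℝ) * (∏ i, hP.1.eigenvalues i) ^ ((1:ℝ)/d)
      ≤ (d:ℝ) * ∑ i, (1/d : ℝ) * hP.1.eigenvalues i :=
        mul_le_mul_of_nonneg_left key (by positivity)
    _ = ∑ i, hP.1.eigenvalues i := by
        rw [Finset.mul_sum]; congr 1; ext i; field_simp

/-- If `M` is real symmetric negative semidefinite with `det (−M) = d^(−d) f^d`
(`f ≥ 0`, `d ≥ 2`), then for every PSD symmetric `a` with `tr a = 1`,
`tr (a * M) + (det a)^(1/d) * f ≤ 0`. -/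
theorem bellman_of_mongeAmpere (d : ℕ) (hd : 2 ≤ d) (f : ℝ) (hf : 0 ≤ f)
    (M : Matrix (Fin d) (Fin d) ℝ) (hM : (-M).PosSemidef)
    (hdet : (-M).det = (d : ℝ) ^ (-(d : ℤ)) * f ^ d) :
    ∀ a : Matrix (Fin d) (Fin d) ℝ, a.PosSemidef → a.trace = 1 →
      (a * M).trace + a.det ^ ((1 : ℝ) / d) * f ≤ 0 := by
  intro a ha htr
  have hd0 : 0 < d := lt_of_lt_of_le two_pos hd
  have hdR : (0:ℝ) < d := Nat.cast_pos.mpr hd0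
  set N := -M with hN
  set s := CFC.sqrt a with hs
  have hss : s * s = a := CFC.sqrt_mul_sqrt_self a ha.nonneg
  have hsH : s.IsHermitian := (CFC.sqrt_nonneg a).posSemidef.1
  have hP : (s * N * s).PosSemidef := by
    have h := hM.mul_mul_conjTranspose_same s
    rwa [hsH.eq] at h
  have h1 : (s * N * s).trace = (N * a).trace := by
    rw [mul_assoc, Matrix.trace_mul_comm, mul_assoc, hss]
  have htrace : (a * M).trace = -(s * N * s).trace := by
    rw [h1, hN]
    simp [Matrix.trace_mul_comm a M]
  have hdetP : (s * N * s).det = a.det * N.det := by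
    rw [Matrix.det_mul, Matrix.det_mul, ← hss, Matrix.det_mul]
    ring
  have hdN : N.det = (f / d) ^ d := by
    rw [hdet, _root_.zpow_neg, zpow_natCast, div_pow]
    field_simp
  have hdetN_rpow : N.det ^ ((1:ℝ)/d) = f / d := by
    rw [hdN, ← Real.rpow_natCast (f/d) d, ← Real.rpow_mul (by positivity)]
    rw [mul_one_div, div_self (Nat.cast_ne_zero.mpr hd0.ne'), Real.rpow_one]
  have key := amgm_trace hd0 hP
  rw [hdetP] at key
  have hadet : 0 ≤ a.det := psd_det_nonneg_s18 ha
  have hNdet : 0 ≤ N.det := psd_det_nonneg_s18 hM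
  rw [Real.mul_rpow hadet hNdet, hdetN_rpow] at key
  have heq : (d:ℝ) * (a.det ^ ((1:ℝ)/d) * (f / d)) = a.det ^ ((1:ℝ)/d) * f := by
    field_simp
  rw [heq] at key
  rw [htrace]
  linarith
end

section
/- Let a be a Hermitian positive semidefinite d×d complex matrix and M a Hermitian positive semidefinite d×d complex matrix. Then Re tr(a·M) = tr(a·M) is real and tr(a·M) ≥ d·(det a)^(1/d)·(det M)^(1/d), where det a and det M are nonnegative reals. -/
open scoped ComplexOrder

lemma herm_trace_eq_sum (d : ℕ) (A : Matrix (Fin d) (Fin d) ℂ)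
    (hA : A.IsHermitian) : A.trace = ∑ i, (hA.eigenvalues i : ℂ) := by
  conv_lhs => rw [hA.spectral_theorem, Unitary.conjStarAlgAut_apply]
  rw [Matrix.trace_mul_cycle,
    Unitary.coe_star_mul_self, one_mul,
    Matrix.trace_diagonal]
  rfl

/-- Complex matrix AM–GM: for Hermitian PSD complex matrices `a` and `M`,
`tr (a * M)` is real and `tr (a * M) ≥ d * (det a)^(1/d) * (det M)^(1/d)`. -/
theorem matrix_amgm_complex (d : ℕ) (hd : 1 ≤ d)
    (a M : Matrix (Fin d) (Fin d) ℂ)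
    (ha : a.PosSemidef) (hM : M.PosSemidef) :
    (a * M).trace.im = 0 ∧
    (a * M).trace.re ≥ d * a.det.re ^ ((1 : ℝ) / d) * M.det.re ^ ((1 : ℝ) / d) := by
  open scoped MatrixOrder in
  set B := CFC.sqrt M with hB
  open scoped MatrixOrder in
  have hBH : B.IsHermitian := (Matrix.nonneg_iff_posSemidef.mp (CFC.sqrt_nonneg M)).1
  open scoped MatrixOrder in
  have hsq : B * B = M := CFC.sqrt_mul_sqrt_self M hM.nonneg
  have hN : (B * a * B).PosSemidef := by
    have := ha.mul_mul_conjTranspose_same B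
    rwa [hBH.eq] at this
  set lam := hN.1.eigenvalues with hlam
  have hlam0 : ∀ i, 0 ≤ lam i := hN.eigenvalues_nonneg
  -- trace identity
  have htr : (a * M).trace = ((∑ i, lam i : ℝ) : ℂ) := by
    have h1 : (a * M).trace = (B * a * B).trace := by
      rw [← hsq, ← mul_assoc, Matrix.trace_mul_cycle]
    rw [h1, herm_trace_eq_sum d _ hN.1]
    push_cast
    rfl
  -- determinants as reals
  have hdeta : a.det = ((∏ i, ha.1.eigenvalues i : ℝ) : ℂ) := by
    rw [ha.1.det_eq_prod_eigenvalues]; push_cast; rfl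
  have hdetM : M.det = ((∏ i, hM.1.eigenvalues i : ℝ) : ℂ) := by
    rw [hM.1.det_eq_prod_eigenvalues]; push_cast; rfl
  have hdetN : (∏ i, lam i : ℝ) = a.det.re * M.det.re := by
    have h2 : (B * a * B).det = a.det * M.det := by
      rw [Matrix.det_mul, Matrix.det_mul, ← hsq, Matrix.det_mul]
      ring
    have h3 : (B * a * B).det = ((∏ i, lam i : ℝ) : ℂ) := by
      rw [hN.1.det_eq_prod_eigenvalues]; push_cast; rfl
    have := h3.symm.trans h2
    rw [hdeta, hdetM] at this
    have : ((∏ i, lam i : ℝ) : ℂ) =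
        (((∏ i, ha.1.eigenvalues i) * (∏ i, hM.1.eigenvalues i) : ℝ) : ℂ) := by
      push_cast at this ⊢; linear_combination this
    rw [hdeta, hdetM]
    exact_mod_cast this
  constructor
  · rw [htr]; simp
  · rw [htr]
    simp only [Complex.ofReal_re]
    have hd0 : (0 : ℝ) < (d : ℝ) := by exact_mod_cast hd
    have hw : ∑ _i : Fin d, (1 / (d : ℝ)) = 1 := by
      simp only [Finset.sum_const, Finset.card_univ, Fintype.card_fin, nsmul_eq_mul,
        mul_one_div]
      exact div_self (ne_of_gt hd0)
    -- AM-GM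
    have hamgm := Real.geom_mean_le_arith_mean_weighted Finset.univ
      (fun _ => 1 / (d : ℝ)) lam (fun i _ => by positivity) hw
      (fun i _ => hlam0 i)
    have hprod : (∏ i, lam i ^ ((1 : ℝ) / d)) = (∏ i, lam i) ^ ((1 : ℝ) / d) := by
      rw [← Real.finset_prod_rpow _ _ (fun i _ => hlam0 i)]
    have hdeta0 : 0 ≤ a.det.re := by
      rw [hdeta, Complex.ofReal_re]
      exact Finset.prod_nonneg fun i _ => ha.eigenvalues_nonneg i
    have hdetM0 : 0 ≤ M.det.re := by
      rw [hdetM, Complex.ofReal_re]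
      exact Finset.prod_nonneg fun i _ => hM.eigenvalues_nonneg i
    have key : (∏ i, lam i) ^ ((1 : ℝ) / d) =
        a.det.re ^ ((1 : ℝ) / d) * M.det.re ^ ((1 : ℝ) / d) := by
      rw [hdetN, Real.mul_rpow hdeta0 hdetM0]
    rw [hprod, key] at hamgm
    have := mul_le_mul_of_nonneg_left hamgm (le_of_lt hd0)
    calc (d : ℝ) * a.det.re ^ ((1 : ℝ) / d) * M.det.re ^ ((1 : ℝ) / d)
        = d * (a.det.re ^ ((1 : ℝ) / d) * M.det.re ^ ((1 : ℝ) / d)) := by ring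
      _ ≤ d * ∑ i, (1 / (d : ℝ)) * lam i := this
      _ = ∑ i, lam i := by
          simp only [one_div]
          rw [← Finset.mul_sum, ← mul_assoc, mul_inv_cancel₀ (ne_of_gt hd0), one_mul]
end
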